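/- Let f: ℝ^k → ℝ be square-integrable under N(0, I_k) with Hermite coefficients c_α, and for θ ∈ ℝ^k define ∇̄f(θ) := E_{Z∼N(0,I_k)}[∇f(Z + θ)]. Then the i-th component satisfies ∇̄f(θ)_i = ∑_{α∈ℕ^k} √(α_i+1) c_{α(i)} ∏_{j∈[k]} θ_j^{α_j}/√(α_j!). -/

import Mathlib

open MeasureTheory Polynomial

/-- Standard Gaussian measure `N(0, I_k)` on `ℝ^k`. -/
noncomputable def stdGauss (k : ℕ) : Measure (EuclideanSpace ℝ (Fin k)) :=
  volume.withDensity fun x =>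
    ENNReal.ofReal ((2 * Real.pi) ^ (-(k : ℝ) / 2) * Real.exp (-‖x‖ ^ 2 / 2))

open Real Filter Set
open scoped ENNReal NNReal




theorem derivative_hermite_int (n : ℕ) :
    derivative (hermite (n + 1)) = C ((n : ℤ) + 1) * hermite n := by
  induction n with
  | zero => simp [hermite_one, hermite_zero]
  | succ n ih =>
    rw [hermite_succ (n + 1), derivative_sub, derivative_mul, derivative_X, ih, derivative_C_mul,
      ]
    push_cast [map_add, map_one]
    linear_combination (-(C (n : ℤ)) - 1) * hermite_succ n

/-- Real Hermite polynomial. -/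
noncomputable def hr (n : ℕ) : Polynomial ℝ := (hermite n).map (Int.castRingHom ℝ)

theorem aeval_hermite_eq (n : ℕ) (x : ℝ) : (aeval x (hermite n) : ℝ) = (hr n).eval x := by
  rw [hr, eval_map, aeval_def, eval₂_eq_eval_map, eval_map]
  rfl

theorem derivative_hr (n : ℕ) : derivative (hr n) = C (n : ℝ) * hr (n - 1) := by
  cases n with
  | zero => simp [hr, hermite_zero]
  | succ n =>
    rw [hr, derivative_map, derivative_hermite_int, Polynomial.map_mul, map_C]
    push_cast
    simp [hr]


theorem monomial_gauss_integrable (n : ℕ) :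
    Integrable (fun x : ℝ => x ^ n * Real.exp (-x ^ 2 / 2)) := by
  have h := integrable_rpow_mul_exp_neg_mul_sq (b := 1/2) (by norm_num) (s := (n : ℝ))
    (by exact neg_one_lt_zero.trans_le (Nat.cast_nonneg n))
  refine h.congr ?_
  filter_upwards with x
  rw [Real.rpow_natCast]
  ring_nf

theorem poly_gauss_integrable (q : Polynomial ℝ) :
    Integrable (fun x : ℝ => q.eval x * Real.exp (-x ^ 2 / 2)) := by
  have : ∀ x : ℝ, q.eval x * Real.exp (-x ^ 2 / 2)
      = ∑ n ∈ Finset.range (q.natDegree + 1), q.coeff n * (x ^ n * Real.exp (-x ^ 2 / 2)) := by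
    intro x
    rw [eval_eq_sum_range, Finset.sum_mul]
    simp [mul_assoc]
  simp_rw [this]
  exact integrable_finset_sum _ fun n _ => (monomial_gauss_integrable n).const_mul _

theorem monomial_gauss_tendsto_atTop (n : ℕ) :
    Tendsto (fun x : ℝ => x ^ n * Real.exp (-x ^ 2 / 2)) atTop (nhds 0) := by
  have h := rpow_mul_exp_neg_mul_sq_isLittleO_exp_neg (b := 1/2) (by norm_num) (n : ℝ)
  have h2 : Tendsto (fun x : ℝ => Real.exp (-(1/2) * x)) atTop (nhds 0) := by
    have h0 : Tendsto (fun x : ℝ => -(1/2) * x) atTop atBot :=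
      tendsto_id.const_mul_atTop_of_neg (by norm_num)
    exact Real.tendsto_exp_atBot.comp h0
  have h3 := h.isBigO.trans_tendsto h2
  refine h3.congr fun x => ?_
  rw [Real.rpow_natCast]
  ring_nf

theorem poly_gauss_tendsto_atTop (q : Polynomial ℝ) :
    Tendsto (fun x : ℝ => q.eval x * Real.exp (-x ^ 2 / 2)) atTop (nhds 0) := by
  have : ∀ x : ℝ, q.eval x * Real.exp (-x ^ 2 / 2)
      = ∑ n ∈ Finset.range (q.natDegree + 1), q.coeff n * (x ^ n * Real.exp (-x ^ 2 / 2)) := by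
    intro x
    rw [eval_eq_sum_range, Finset.sum_mul]
    simp [mul_assoc]
  simp_rw [this]
  have : Tendsto (fun x : ℝ => ∑ n ∈ Finset.range (q.natDegree + 1),
      q.coeff n * (x ^ n * Real.exp (-x ^ 2 / 2))) atTop
      (nhds (∑ n ∈ Finset.range (q.natDegree + 1), q.coeff n * 0)) :=
    tendsto_finset_sum _ fun n _ => ((monomial_gauss_tendsto_atTop n).const_mul _)
  simpa using this

theorem poly_gauss_tendsto_atBot (q : Polynomial ℝ) :
    Tendsto (fun x : ℝ => q.eval x * Real.exp (-x ^ 2 / 2)) atBot (nhds 0) := by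
  have h := poly_gauss_tendsto_atTop (q.comp (-X))
  have h2 := h.comp tendsto_neg_atBot_atTop
  refine h2.congr fun x => ?_
  simp only [Function.comp, eval_comp, eval_neg, eval_X, neg_neg]
  ring_nf

theorem shift_poly_gauss_integrable (q : Polynomial ℝ) (t : ℝ) :
    Integrable (fun x : ℝ => q.eval (x + t) * Real.exp (-x ^ 2 / 2)) := by
  have := poly_gauss_integrable (q.comp (X + C t))
  simpa [eval_comp] using this

theorem shift_poly_gauss_tendsto_atTop (q : Polynomial ℝ) (t : ℝ) :
    Tendsto (fun x : ℝ => q.eval (x + t) * Real.exp (-x ^ 2 / 2)) atTop (nhds 0) := by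
  have := poly_gauss_tendsto_atTop (q.comp (X + C t))
  simpa [eval_comp] using this

theorem shift_poly_gauss_tendsto_atBot (q : Polynomial ℝ) (t : ℝ) :
    Tendsto (fun x : ℝ => q.eval (x + t) * Real.exp (-x ^ 2 / 2)) atBot (nhds 0) := by
  have := poly_gauss_tendsto_atBot (q.comp (X + C t))
  simpa [eval_comp] using this

theorem mul_shift_poly_gauss_integrable (q : Polynomial ℝ) (t : ℝ) :
    Integrable (fun x : ℝ => x * (q.eval (x + t) * Real.exp (-x ^ 2 / 2))) := by
  have := poly_gauss_integrable (X * q.comp (X + C t))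
  refine this.congr ?_
  filter_upwards with x
  simp [eval_comp]
  ring

/-- Integration by parts for the Gaussian. -/
theorem gauss_ibp (q : Polynomial ℝ) (t : ℝ) :
    ∫ x : ℝ, (derivative q).eval (x + t) * Real.exp (-x ^ 2 / 2)
      = ∫ x : ℝ, x * (q.eval (x + t) * Real.exp (-x ^ 2 / 2)) := by
  set F : ℝ → ℝ := fun x => q.eval (x + t) * Real.exp (-x ^ 2 / 2) with hF
  set F' : ℝ → ℝ := fun x =>
    (derivative q).eval (x + t) * Real.exp (-x ^ 2 / 2) - x * (q.eval (x + t) * Real.exp (-x ^ 2 / 2))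
    with hF'
  have hderiv : ∀ x : ℝ, HasDerivAt F (F' x) x := by
    intro x
    have hp : HasDerivAt (fun x : ℝ => q.eval (x + t)) ((derivative q).eval (x + t)) x := by
      simpa [Function.comp_def] using (q.hasDerivAt (x + t)).comp x ((hasDerivAt_id x).add_const t)
    have h1 : HasDerivAt (fun x : ℝ => -x ^ 2 / 2) (-x) x := by
      have := ((hasDerivAt_pow 2 x).neg.div_const 2)
      exact this.congr_deriv (by ring)
    have hg : HasDerivAt (fun x : ℝ => Real.exp (-x ^ 2 / 2)) (-x * Real.exp (-x ^ 2 / 2)) x := by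
      have := h1.exp
      convert this using 1
      ring
    have := hp.mul hg
    exact this.congr_deriv (by simp only [hF']; ring)
  have hint : Integrable F' := by
    exact (shift_poly_gauss_integrable _ t).sub (mul_shift_poly_gauss_integrable q t)
  have htop : Tendsto F atTop (nhds 0) := shift_poly_gauss_tendsto_atTop q t
  have hbot : Tendsto F atBot (nhds 0) := shift_poly_gauss_tendsto_atBot q t
  have hIic : ∫ x in Iic (0:ℝ), F' x = F 0 - 0 :=
    integral_Iic_of_hasDerivAt_of_tendsto (hderiv 0).continuousAt.continuousWithinAt
      (fun x _ => hderiv x) hint.integrableOn hbot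
  have hIoi : ∫ x in Ioi (0:ℝ), F' x = 0 - F 0 :=
    integral_Ioi_of_hasDerivAt_of_tendsto (hderiv 0).continuousAt.continuousWithinAt
      (fun x _ => hderiv x) hint.integrableOn htop
  have hzero : ∫ x : ℝ, F' x = 0 := by
    rw [← intervalIntegral.integral_Iic_add_Ioi (b := (0:ℝ)) hint.integrableOn hint.integrableOn, hIic, hIoi]
    ring
  have hsub := integral_sub (shift_poly_gauss_integrable (derivative q) t)
    (mul_shift_poly_gauss_integrable q t)
  rw [hF'] at hzero
  rw [← sub_eq_zero, ← hsub]
  exact hzero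

theorem hermite_gauss_integral (n : ℕ) (t : ℝ) :
    ∫ x : ℝ, (hr n).eval (x + t) * Real.exp (-x ^ 2 / 2) = t ^ n * Real.sqrt (2 * Real.pi) := by
  induction n with
  | zero =>
    simp only [hr, hermite_zero, Polynomial.map_C, eval_C, Int.cast_one, one_mul, pow_zero]
    have := integral_gaussian (1/2)
    rw [show Real.pi / (1/2) = 2 * Real.pi by ring] at this
    rw [← this]
    congr 1
    funext x
    rw [map_one, one_mul]
    ring_nf
  | succ n ih =>
    have hsplit : hr (n + 1) = X * hr n - derivative (hr n) := by
      rw [hr, hermite_succ, Polynomial.map_sub, Polynomial.map_mul, map_X, ← derivative_map]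
      rfl
    have heval : ∀ x : ℝ, (hr (n+1)).eval (x + t) * Real.exp (-x ^ 2 / 2)
        = x * ((hr n).eval (x + t) * Real.exp (-x ^ 2 / 2))
          + t * ((hr n).eval (x + t) * Real.exp (-x ^ 2 / 2))
          - (derivative (hr n)).eval (x + t) * Real.exp (-x ^ 2 / 2) := by
      intro x
      rw [hsplit]
      simp only [eval_sub, eval_mul, eval_X]
      ring
    calc ∫ x : ℝ, (hr (n+1)).eval (x + t) * Real.exp (-x ^ 2 / 2)
        = ∫ x : ℝ, (x * ((hr n).eval (x + t) * Real.exp (-x ^ 2 / 2))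
            + t * ((hr n).eval (x + t) * Real.exp (-x ^ 2 / 2))
            - (derivative (hr n)).eval (x + t) * Real.exp (-x ^ 2 / 2)) := by
          simp_rw [heval]
      _ = (∫ x : ℝ, x * ((hr n).eval (x + t) * Real.exp (-x ^ 2 / 2)))
            + t * (∫ x : ℝ, (hr n).eval (x + t) * Real.exp (-x ^ 2 / 2))
            - ∫ x : ℝ, (derivative (hr n)).eval (x + t) * Real.exp (-x ^ 2 / 2) := by
          rw [integral_sub, integral_add]
          · rw [integral_const_mul]
          · exact mul_shift_poly_gauss_integrable _ t
          · exact ((shift_poly_gauss_integrable _ t).const_mul t)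
          · exact (mul_shift_poly_gauss_integrable _ t).add
              ((shift_poly_gauss_integrable _ t).const_mul t)
          · exact shift_poly_gauss_integrable _ t
      _ = t * (t ^ n * Real.sqrt (2 * Real.pi)) := by
          rw [gauss_ibp, ih]; ring
      _ = t ^ (n + 1) * Real.sqrt (2 * Real.pi) := by ring

section Multivariate

variable {k : ℕ}

noncomputable def gaussDensity (k : ℕ) (x : EuclideanSpace ℝ (Fin k)) : ℝ :=
  (2 * Real.pi) ^ (-(k : ℝ) / 2) * Real.exp (-‖x‖ ^ 2 / 2)

theorem gaussDensity_nonneg (x : EuclideanSpace ℝ (Fin k)) : 0 ≤ gaussDensity k x := by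
  unfold gaussDensity; positivity

theorem gaussDensity_cont : Continuous (gaussDensity k) := by
  unfold gaussDensity
  fun_prop

theorem stdGauss_eq (k : ℕ) :
    stdGauss k = volume.withDensity fun x => ((gaussDensity k x).toNNReal : ℝ≥0∞) := rfl

theorem gaussDensity_meas : Measurable fun x : EuclideanSpace ℝ (Fin k) =>
    (gaussDensity k x).toNNReal :=
  (continuous_real_toNNReal.comp gaussDensity_cont).measurable

theorem integral_stdGauss (G : EuclideanSpace ℝ (Fin k) → ℝ) :
    ∫ z, G z ∂(stdGauss k) = ∫ z, gaussDensity k z * G z := by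
  rw [stdGauss_eq, integral_withDensity_eq_integral_smul gaussDensity_meas]
  congr 1
  funext z
  rw [NNReal.smul_def, Real.coe_toNNReal _ (gaussDensity_nonneg z), smul_eq_mul]

theorem integrable_stdGauss_iff (G : EuclideanSpace ℝ (Fin k) → ℝ) :
    Integrable G (stdGauss k) ↔ Integrable (fun z => gaussDensity k z * G z) volume := by
  rw [stdGauss_eq, integrable_withDensity_iff_integrable_smul gaussDensity_meas]
  constructor <;> intro h <;> refine h.congr ?_ <;> filter_upwards with z <;>
    rw [NNReal.smul_def, Real.coe_toNNReal _ (gaussDensity_nonneg z), smul_eq_mul]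

theorem gaussDensity_prod (x : EuclideanSpace ℝ (Fin k)) :
    gaussDensity k x = ∏ j, ((2 * Real.pi) ^ (-(1 : ℝ) / 2) * Real.exp (-(x j) ^ 2 / 2)) := by
  rw [Finset.prod_mul_distrib, Finset.prod_const]
  have h2π : (0 : ℝ) ≤ 2 * Real.pi := by positivity
  have hc : ((2 * Real.pi) ^ (-(1 : ℝ) / 2)) ^ (Finset.univ (α := Fin k)).card
      = (2 * Real.pi) ^ (-(k : ℝ) / 2) := by
    rw [Finset.card_univ, Fintype.card_fin, ← Real.rpow_natCast ((2 * Real.pi) ^ (-(1:ℝ)/2)) k,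
      ← Real.rpow_mul h2π]
    congr 1
    ring
  have hn : ‖x‖ ^ 2 = ∑ j, (x j) ^ 2 := by
    rw [EuclideanSpace.norm_eq, Real.sq_sqrt (by positivity)]
    simp [sq_abs]
  have he : Real.exp (-‖x‖ ^ 2 / 2) = ∏ j, Real.exp (-(x j) ^ 2 / 2) := by
    rw [← Real.exp_sum, hn]
    congr 1
    rw [neg_div, Finset.sum_div, ← Finset.sum_neg_distrib]
    simp [neg_div]
  rw [gaussDensity, hc, he]

theorem euclid_integral_prod (F : Fin k → ℝ → ℝ) :
    ∫ z : EuclideanSpace ℝ (Fin k), ∏ j, F j (z j) = ∏ j, ∫ x : ℝ, F j x := by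
  have h := (EuclideanSpace.volume_preserving_symm_measurableEquiv_toLp (Fin k)).integral_comp'
    (g := fun y : Fin k → ℝ => ∏ j, F j (y j))
  rw [← MeasureTheory.integral_fintype_prod_eq_prod F, ← MeasureTheory.volume_pi, ← h]
  rfl

theorem euclid_integrable_prod (F : Fin k → ℝ → ℝ) (hF : ∀ j, Integrable (F j)) :
    Integrable (fun z : EuclideanSpace ℝ (Fin k) => ∏ j, F j (z j)) volume := by
  have h := ((EuclideanSpace.volume_preserving_symm_measurableEquiv_toLp (Fin k)).integrable_comp_emb
    (MeasurableEquiv.measurableEmbedding _)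
    (g := fun y : Fin k → ℝ => ∏ j, F j (y j))).2 (Integrable.fintype_prod hF)
  exact h

theorem stdGauss_prod_integrable (q : Fin k → Polynomial ℝ) (θ : EuclideanSpace ℝ (Fin k)) :
    Integrable (fun z : EuclideanSpace ℝ (Fin k) => ∏ j, (q j).eval (z j + θ j)) (stdGauss k) := by
  rw [integrable_stdGauss_iff]
  have key : ∀ z : EuclideanSpace ℝ (Fin k),
      gaussDensity k z * ∏ j, (q j).eval (z j + θ j)
        = ∏ j, ((2 * Real.pi) ^ (-(1 : ℝ) / 2) * ((q j).eval (z j + θ j)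
            * Real.exp (-(z j) ^ 2 / 2))) := by
    intro z
    rw [gaussDensity_prod, ← Finset.prod_mul_distrib]
    exact Finset.prod_congr rfl fun j _ => by ring
  simp_rw [key]
  exact euclid_integrable_prod _ fun j => ((shift_poly_gauss_integrable (q j) (θ j)).const_mul _)

theorem stdGauss_prod_integral (β : Fin k → ℕ) (θ : EuclideanSpace ℝ (Fin k)) :
    ∫ z, (∏ j, (hr (β j)).eval (z j + θ j)) ∂(stdGauss k) = ∏ j, θ j ^ (β j) := by
  rw [integral_stdGauss]
  have key : ∀ z : EuclideanSpace ℝ (Fin k),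
      gaussDensity k z * ∏ j, (hr (β j)).eval (z j + θ j)
        = ∏ j, ((2 * Real.pi) ^ (-(1 : ℝ) / 2) * ((hr (β j)).eval (z j + θ j)
            * Real.exp (-(z j) ^ 2 / 2))) := by
    intro z
    rw [gaussDensity_prod, ← Finset.prod_mul_distrib]
    exact Finset.prod_congr rfl fun j _ => by ring
  simp_rw [key]
  rw [euclid_integral_prod (fun j x => (2 * Real.pi) ^ (-(1 : ℝ) / 2) * ((hr (β j)).eval (x + θ j)
      * Real.exp (-x ^ 2 / 2)))]
  refine Finset.prod_congr rfl fun j _ => ?_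
  rw [integral_const_mul]
  have h1 : ∫ x : ℝ, (hr (β j)).eval (x + θ j) * Real.exp (-x ^ 2 / 2)
      = θ j ^ (β j) * Real.sqrt (2 * Real.pi) := hermite_gauss_integral (β j) (θ j)
  rw [h1, Real.sqrt_eq_rpow, ← mul_assoc, mul_comm ((2 * Real.pi) ^ (-(1:ℝ)/2)) _, mul_assoc,
    ← Real.rpow_add (by positivity)]
  norm_num

end Multivariate

/-- Normalized multivariate (probabilists') Hermite polynomial `H_α(z) = ∏_j H_{α_j}(z_j)/√(α_j!)`. -/
noncomputable def hermiteBasis {k : ℕ} (α : Fin k → ℕ) (z : EuclideanSpace ℝ (Fin k)) : ℝ :=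
  ∏ j, (Polynomial.aeval (z j) (Polynomial.hermite (α j))) / Real.sqrt (Nat.factorial (α j))


section Main

variable {k : ℕ}

theorem hermiteBasis_eq (α : Fin k → ℕ) (z : EuclideanSpace ℝ (Fin k)) :
    hermiteBasis α z = (∏ j, (Real.sqrt (α j).factorial)⁻¹) * ∏ j, (hr (α j)).eval (z j) := by
  rw [hermiteBasis, ← Finset.prod_mul_distrib]
  exact Finset.prod_congr rfl fun j _ => by rw [aeval_hermite_eq, div_eq_mul_inv, mul_comm]

theorem hasFDerivAt_P (α : Fin k → ℕ) (x : EuclideanSpace ℝ (Fin k)) :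
    HasFDerivAt (fun z : EuclideanSpace ℝ (Fin k) => ∏ j, (hr (α j)).eval (z j))
      (∑ j, (∏ l ∈ Finset.univ.erase j, (hr (α l)).eval (x l)) •
        (((derivative (hr (α j))).eval (x j)) •
          (EuclideanSpace.proj j : EuclideanSpace ℝ (Fin k) →L[ℝ] ℝ))) x := by
  classical
  refine HasFDerivAt.finset_prod fun j _ => ?_
  have hp : HasFDerivAt (fun z : EuclideanSpace ℝ (Fin k) => z j)
      (EuclideanSpace.proj j : EuclideanSpace ℝ (Fin k) →L[ℝ] ℝ) x := by
    have h := (EuclideanSpace.proj (𝕜 := ℝ) j :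
        EuclideanSpace ℝ (Fin k) →L[ℝ] ℝ).hasFDerivAt (x := x)
    exact h
  exact ((hr (α j)).hasDerivAt (x j)).comp_hasFDerivAt x hp

noncomputable def sumDeriv (c : (Fin k → ℕ) →₀ ℝ) (x : EuclideanSpace ℝ (Fin k)) :
    EuclideanSpace ℝ (Fin k) →L[ℝ] ℝ :=
  ∑ α ∈ c.support, (c α * ∏ j, (Real.sqrt (α j).factorial)⁻¹) •
    ∑ j, (∏ l ∈ Finset.univ.erase j, (hr (α l)).eval (x l)) •
      (((derivative (hr (α j))).eval (x j)) •
        (EuclideanSpace.proj j : EuclideanSpace ℝ (Fin k) →L[ℝ] ℝ))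

theorem hasFDerivAt_sum (c : (Fin k → ℕ) →₀ ℝ) (x : EuclideanSpace ℝ (Fin k)) :
    HasFDerivAt (fun z => ∑ α ∈ c.support, c α * hermiteBasis α z) (sumDeriv c x) x := by
  have hfun : (fun z : EuclideanSpace ℝ (Fin k) => ∑ α ∈ c.support, c α * hermiteBasis α z)
      = fun z => ∑ α ∈ c.support,
          (c α * ∏ j, (Real.sqrt (α j).factorial)⁻¹) * ∏ j, (hr (α j)).eval (z j) := by
    funext z
    exact Finset.sum_congr rfl fun α _ => by rw [hermiteBasis_eq]; ring
  rw [hfun, sumDeriv]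
  exact HasFDerivAt.fun_sum fun α _ => (hasFDerivAt_P α x).const_mul _

theorem sumDeriv_apply_single (c : (Fin k → ℕ) →₀ ℝ) (x : EuclideanSpace ℝ (Fin k)) (i : Fin k) :
    sumDeriv c x (EuclideanSpace.single i 1)
      = ∑ α ∈ c.support, (c α * (∏ j, (Real.sqrt (α j).factorial)⁻¹) * (α i : ℝ))
          * ∏ j, (hr ((Function.update α i (α i - 1)) j)).eval (x j) := by
  classical
  rw [sumDeriv, ContinuousLinearMap.sum_apply]
  refine Finset.sum_congr rfl fun α _ => ?_
  rw [ContinuousLinearMap.smul_apply, ContinuousLinearMap.sum_apply]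
  have hinner : ∑ j, ((∏ l ∈ Finset.univ.erase j, (hr (α l)).eval (x l)) •
        (((derivative (hr (α j))).eval (x j)) •
          (EuclideanSpace.proj j : EuclideanSpace ℝ (Fin k) →L[ℝ] ℝ)))
          (EuclideanSpace.single i 1)
      = (∏ l ∈ Finset.univ.erase i, (hr (α l)).eval (x l)) * ((α i : ℝ)
          * (hr (α i - 1)).eval (x i)) := by
    rw [Finset.sum_eq_single i]
    · rw [ContinuousLinearMap.smul_apply, ContinuousLinearMap.smul_apply]
      have : (EuclideanSpace.proj i : EuclideanSpace ℝ (Fin k) →L[ℝ] ℝ)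
          (EuclideanSpace.single i 1) = 1 := by
        simp [EuclideanSpace.single_apply]
      rw [this, derivative_hr, eval_mul, eval_C]
      simp [smul_eq_mul]
    · intro j _ hj
      have : (EuclideanSpace.proj j : EuclideanSpace ℝ (Fin k) →L[ℝ] ℝ)
          (EuclideanSpace.single i 1) = 0 := by
        simp [EuclideanSpace.single_apply, hj]
      rw [ContinuousLinearMap.smul_apply, ContinuousLinearMap.smul_apply, this]
      simp
    · intro h; exact absurd (Finset.mem_univ i) h
  rw [hinner]
  have hprod : ∏ j, (hr ((Function.update α i (α i - 1)) j)).eval (x j)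
      = (hr (α i - 1)).eval (x i) * ∏ l ∈ Finset.univ.erase i, (hr (α l)).eval (x l) := by
    rw [← Finset.mul_prod_erase Finset.univ _ (Finset.mem_univ i)]
    congr 1
    · rw [Function.update_self]
    · exact Finset.prod_congr rfl fun l hl =>
        by rw [Function.update_of_ne (Finset.ne_of_mem_erase hl)]
  rw [hprod, smul_eq_mul]
  ring

theorem gradient_component {f : EuclideanSpace ℝ (Fin k) → ℝ} {x : EuclideanSpace ℝ (Fin k)}
    {L : EuclideanSpace ℝ (Fin k) →L[ℝ] ℝ} (h : HasFDerivAt f L x) (i : Fin k) :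
    gradient f x i = L (EuclideanSpace.single i 1) := by
  rw [(h.hasGradientAt).gradient]
  have h2 := InnerProductSpace.toDual_symm_apply (𝕜 := ℝ) (E := EuclideanSpace ℝ (Fin k))
    (y := L) (x := EuclideanSpace.single i (1 : ℝ))
  rw [← h2, EuclideanSpace.inner_single_right]
  simp

end Main

section RHS

variable {k : ℕ}

theorem sqrt_fac_identity (m : ℕ) :
    Real.sqrt ((m : ℝ) + 1) * (Real.sqrt (Nat.factorial m))⁻¹
      = ((m : ℝ) + 1) * (Real.sqrt (Nat.factorial (m + 1)))⁻¹ := by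
  have hcast : ((Nat.factorial (m + 1) : ℝ)) = ((m : ℝ) + 1) * (Nat.factorial m : ℝ) := by
    rw [Nat.factorial_succ]
    push_cast
    ring
  have h1 : Real.sqrt (Nat.factorial (m + 1))
      = Real.sqrt ((m : ℝ) + 1) * Real.sqrt (Nat.factorial m) := by
    rw [hcast, Real.sqrt_mul (by positivity)]
  have hm1 : (0 : ℝ) < Real.sqrt ((m : ℝ) + 1) := Real.sqrt_pos.2 (by positivity)
  have hm2 : (0 : ℝ) < Real.sqrt (Nat.factorial m) :=
    Real.sqrt_pos.2 (by exact_mod_cast Nat.factorial_pos m)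
  rw [h1, mul_inv]
  field_simp
  rw [Real.sq_sqrt (by positivity)]

theorem rhs_eq (c : (Fin k → ℕ) →₀ ℝ) (θ : EuclideanSpace ℝ (Fin k)) (i : Fin k) :
    (∑ᶠ α : Fin k → ℕ, Real.sqrt ((α i : ℝ) + 1) * c (Function.update α i (α i + 1))
        * ∏ j, θ j ^ (α j) / Real.sqrt (Nat.factorial (α j)))
      = ∑ α ∈ c.support, (c α * (∏ j, (Real.sqrt (α j).factorial)⁻¹) * (α i : ℝ))
          * ∏ j, θ j ^ ((Function.update α i (α i - 1)) j) := by
  classical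
  set T : (Fin k → ℕ) → ℝ := fun β => Real.sqrt ((β i : ℝ) + 1)
    * c (Function.update β i (β i + 1))
    * ∏ j, θ j ^ (β j) / Real.sqrt (Nat.factorial (β j)) with hT
  have hdec : ∀ β : Fin k → ℕ,
      Function.update (Function.update β i (β i + 1)) i
        ((Function.update β i (β i + 1)) i - 1) = β := by
    intro β
    rw [Function.update_self, Nat.add_sub_cancel, Function.update_idem, Function.update_eq_self]
  have hTsupp : Function.support T
      ⊆ ↑((c.support).image fun α => Function.update α i (α i - 1)) := by
    intro β hβ
    have hc : c (Function.update β i (β i + 1)) ≠ 0 := by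
      intro h0
      apply hβ
      simp [hT, h0]
    simp only [Finset.coe_image, Set.mem_image, Finset.mem_coe]
    exact ⟨Function.update β i (β i + 1), Finsupp.mem_support_iff.2 hc, hdec β⟩
  rw [finsum_eq_sum_of_support_subset T hTsupp]
  have himage : ∑ β ∈ (c.support).image (fun α => Function.update α i (α i - 1)), T β
      = ∑ β ∈ ((c.support).filter fun α => α i ≠ 0).image
          (fun α => Function.update α i (α i - 1)), T β := by
    symm
    refine Finset.sum_subset (Finset.image_subset_image (Finset.filter_subset _ _)) ?_
    intro β hβ hnot
    by_contra hTβ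
    have hc : c (Function.update β i (β i + 1)) ≠ 0 := by
      intro h0
      apply hTβ
      simp [hT, h0]
    apply hnot
    refine Finset.mem_image.2 ⟨Function.update β i (β i + 1), ?_, hdec β⟩
    refine Finset.mem_filter.2 ⟨Finsupp.mem_support_iff.2 hc, ?_⟩
    rw [Function.update_self]
    exact Nat.succ_ne_zero _
  have hrestore : ∀ α : Fin k → ℕ, α i ≠ 0 →
      Function.update (Function.update α i (α i - 1)) i
        ((Function.update α i (α i - 1)) i + 1) = α := by
    intro α hαi
    rw [Function.update_self, Function.update_idem,
      Nat.sub_add_cancel (Nat.one_le_iff_ne_zero.mpr hαi), Function.update_eq_self]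
  have hinj : ∑ β ∈ ((c.support).filter fun α => α i ≠ 0).image
        (fun α => Function.update α i (α i - 1)), T β
      = ∑ α ∈ (c.support).filter (fun α => α i ≠ 0),
          T (Function.update α i (α i - 1)) := by
    refine Finset.sum_image ?_
    intro a ha b hb hab
    have ha' := (Finset.mem_filter.1 ha).2
    have hb' := (Finset.mem_filter.1 hb).2
    have h2 := congrArg (fun g : Fin k → ℕ => Function.update g i (g i + 1)) hab
    simp only at h2
    rw [hrestore a ha', hrestore b hb'] at h2
    exact h2
  have hsum_filter : ∑ α ∈ c.support, (c α * (∏ j, (Real.sqrt (α j).factorial)⁻¹) * (α i : ℝ))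
        * ∏ j, θ j ^ ((Function.update α i (α i - 1)) j)
      = ∑ α ∈ (c.support).filter (fun α => α i ≠ 0),
          (c α * (∏ j, (Real.sqrt (α j).factorial)⁻¹) * (α i : ℝ))
            * ∏ j, θ j ^ ((Function.update α i (α i - 1)) j) := by
    symm
    refine Finset.sum_filter_of_ne ?_
    intro α _ hne h0
    apply hne
    simp [h0]
  rw [himage, hinj, hsum_filter]
  refine Finset.sum_congr rfl fun α hα => ?_
  have hαi := (Finset.mem_filter.1 hα).2
  obtain ⟨m, hm⟩ : ∃ m, α i = m + 1 := ⟨α i - 1, (Nat.succ_pred_eq_of_ne_zero hαi).symm⟩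
  have hβi : (Function.update α i (α i - 1)) i = m := by
    rw [Function.update_self, hm]
    omega
  -- expand T
  rw [hT]
  simp only
  rw [hrestore α hαi]
  -- split the divisions product
  have hsplit : ∏ j, θ j ^ ((Function.update α i (α i - 1)) j)
        / Real.sqrt (Nat.factorial ((Function.update α i (α i - 1)) j))
      = (∏ j, θ j ^ ((Function.update α i (α i - 1)) j))
          * ∏ j, (Real.sqrt (Nat.factorial ((Function.update α i (α i - 1)) j)))⁻¹ := by
    rw [← Finset.prod_mul_distrib]
    exact Finset.prod_congr rfl fun j _ => div_eq_mul_inv _ _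
  rw [hsplit, hβi]
  -- factor the i-th term out of the two factorial products
  have hfac1 : ∏ j, (Real.sqrt (Nat.factorial ((Function.update α i (α i - 1)) j)))⁻¹
      = (Real.sqrt (Nat.factorial m))⁻¹
          * ∏ l ∈ Finset.univ.erase i, (Real.sqrt (Nat.factorial (α l)))⁻¹ := by
    rw [← Finset.mul_prod_erase Finset.univ _ (Finset.mem_univ i)]
    congr 1
    · rw [Function.update_self, hm, Nat.add_sub_cancel]
    · exact Finset.prod_congr rfl fun l hl => by
        rw [Function.update_of_ne (Finset.ne_of_mem_erase hl)]
  have hfac2 : ∏ j, (Real.sqrt (Nat.factorial (α j)))⁻¹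
      = (Real.sqrt (Nat.factorial (m + 1)))⁻¹
          * ∏ l ∈ Finset.univ.erase i, (Real.sqrt (Nat.factorial (α l)))⁻¹ := by
    rw [← Finset.mul_prod_erase Finset.univ _ (Finset.mem_univ i)]
    congr 1
    rw [hm]
  rw [hfac1, hfac2, hm]
  have hkey := sqrt_fac_identity m
  push_cast
  linear_combination (c α * (∏ x : Fin k, θ x ^ Function.update α i m x)
    * (∏ l ∈ Finset.univ.erase i, (Real.sqrt ((α l).factorial : ℝ))⁻¹)) * hkey

end RHS

/-- **Gaussian-smoothed gradient as a power series in `θ`.**  If `f = ∑_α c_α H_α` and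
`∇̄f(θ) := E_{Z∼N(0,I_k)}[∇f(Z + θ)]`, then
`∇̄f(θ)_i = ∑_α √(α_i+1) c_{α(i)} ∏_j θ_j^{α_j}/√(α_j!)`. -/
theorem smoothed_gradient_series {k : ℕ} (c : (Fin k → ℕ) →₀ ℝ)
    (f : EuclideanSpace ℝ (Fin k) → ℝ)
    (hf : ∀ z, f z = ∑ α ∈ c.support, c α * hermiteBasis α z)
    (hL2 : Integrable (fun z => f z ^ 2) (stdGauss k))
    (hint : ∀ θ : EuclideanSpace ℝ (Fin k),
      Integrable (fun z => gradient f (z + θ)) (stdGauss k))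
    (θ : EuclideanSpace ℝ (Fin k)) (i : Fin k) :
    (∫ z, gradient f (z + θ) ∂(stdGauss k)) i
      = ∑ᶠ α : Fin k → ℕ, Real.sqrt ((α i : ℝ) + 1)
          * c (Function.update α i (α i + 1))
          * ∏ j, θ j ^ (α j) / Real.sqrt (Nat.factorial (α j)) := by
  classical
  have hfe : f = fun z => ∑ α ∈ c.support, c α * hermiteBasis α z := funext hf
  subst hfe
  rw [rhs_eq c θ i]
  have hA := (EuclideanSpace.proj (𝕜 := ℝ) i :
      EuclideanSpace ℝ (Fin k) →L[ℝ] ℝ).integral_comp_comm (hint θ)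
  have hA' : (∫ z, gradient (fun z => ∑ α ∈ c.support, c α * hermiteBasis α z) (z + θ)
        ∂(stdGauss k)) i
      = ∫ z, (gradient (fun z => ∑ α ∈ c.support, c α * hermiteBasis α z) (z + θ)) i
          ∂(stdGauss k) := by
    simpa using hA.symm
  rw [hA']
  have hB : (fun z : EuclideanSpace ℝ (Fin k) =>
        (gradient (fun z => ∑ α ∈ c.support, c α * hermiteBasis α z) (z + θ)) i)
      = fun z => ∑ α ∈ c.support,
          (c α * (∏ j, (Real.sqrt (α j).factorial)⁻¹) * (α i : ℝ))
            * ∏ j, (hr ((Function.update α i (α i - 1)) j)).eval (z j + θ j) := by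
    funext z
    rw [gradient_component (hasFDerivAt_sum c (z + θ)) i, sumDeriv_apply_single]
    rfl
  rw [hB, integral_finset_sum _ (fun α _ =>
    ((stdGauss_prod_integrable (fun j => hr ((Function.update α i (α i - 1)) j)) θ).const_mul _))]
  refine Finset.sum_congr rfl fun α _ => ?_
  rw [integral_const_mul, stdGauss_prod_integral]
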